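/- Let g ∈ L²(𝕋) and let S₁,...,Sₙ be i.i.d. uniform on 𝕋 with N(i) denoting the index of the clockwise successor of S_i among the sample. If g is continuous, then Bₙ = (1/n) ∑ᵢ g(S_{N(i)}) · conj(g(S_i)) converges almost surely to ∫_𝕋 |g(s)|² ds. -/

import Mathlib

open MeasureTheory Filter

noncomputable def frac (x : UnitAddCircle) : ℝ := (AddCircle.equivIco 1 0 x : ℝ)

lemma frac_coe (x : ℝ) : frac (x : UnitAddCircle) = Int.fract x := by
  simp [frac, AddCircle.coe_equivIco_mk_apply]

lemma coe_frac (z : UnitAddCircle) : ((frac z : ℝ) : UnitAddCircle) = z :=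
  (AddCircle.equivIco 1 0).symm_apply_apply z

lemma frac_mem (z : UnitAddCircle) : frac z ∈ Set.Ico (0:ℝ) 1 := by
  have := (AddCircle.equivIco 1 0 z).2
  simpa [frac] using this

lemma frac_sub (x y : UnitAddCircle) : frac (x - y) = Int.fract (frac x - frac y) := by
  conv_lhs => rw [← coe_frac x, ← coe_frac y]
  rw [← AddCircle.coe_sub, frac_coe]

lemma norm_le_frac (z : UnitAddCircle) : ‖z‖ ≤ frac z := by
  conv_lhs => rw [← coe_frac z]
  rw [UnitAddCircle.norm_eq]
  obtain ⟨h0, h1⟩ := frac_mem z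
  set t := frac z with ht
  rcases lt_or_ge t (1/2) with h | h
  · have : round t = 0 := by
      rw [round_eq]
      refine Int.floor_eq_zero_iff.2 ?_
      constructor <;> simp <;> linarith
    rw [this]
    simp [abs_of_nonneg h0]
  · have : round t = 1 := by
      rw [round_eq]
      have : ⌊t + 1/2⌋ = 1 := by
        rw [Int.floor_eq_iff]
        constructor <;> push_cast <;> linarith
      simpa using this
    rw [this]
    push_cast
    rw [abs_of_nonpos (by linarith)]
    linarith

lemma measurable_frac : Measurable frac :=
  measurable_subtype_coe.comp (AddCircle.measurableEquivIco 1 0).measurable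

lemma arc_meas (a b : ℝ) : MeasurableSet (frac ⁻¹' Set.Ico a b) :=
  measurable_frac measurableSet_Ico

lemma arc_pos (k j : ℕ) (hj : j < k + 2) :
    0 < volume (frac ⁻¹' Set.Ico ((j:ℝ)/((k:ℝ)+2)) (((j:ℝ)+1)/((k:ℝ)+2))) := by
  have hK : (0:ℝ) < (k:ℝ) + 2 := by positivity
  have key := AddCircle.add_projection_respects_measure (T := 1) 0
    (arc_meas ((j:ℝ)/((k:ℝ)+2)) (((j:ℝ)+1)/((k:ℝ)+2)))
  have hsub : Set.Ioo ((j:ℝ)/((k:ℝ)+2)) (((j:ℝ)+1)/((k:ℝ)+2)) ⊆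
      (QuotientAddGroup.mk ⁻¹' (frac ⁻¹' Set.Ico ((j:ℝ)/((k:ℝ)+2)) (((j:ℝ)+1)/((k:ℝ)+2))))
        ∩ Set.Ioc 0 (0 + 1) := by
    rintro x ⟨hx1, hx2⟩
    have hj1 : ((j:ℝ)+1)/((k:ℝ)+2) ≤ 1 := by
      rw [div_le_one hK]
      have : (j:ℝ) + 1 ≤ (k:ℝ) + 2 := by exact_mod_cast hj
      linarith
    have hx0 : 0 < x := lt_of_le_of_lt (by positivity) hx1
    have hx1' : x < 1 := lt_of_lt_of_le hx2 hj1
    constructor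
    · simp only [Set.mem_preimage]
      rw [show (QuotientAddGroup.mk x : UnitAddCircle) = ((x : ℝ) : UnitAddCircle) from rfl,
        frac_coe, Int.fract_eq_self.2 ⟨hx0.le, hx1'⟩]
      exact ⟨hx1.le, hx2⟩
    · exact ⟨hx0, by linarith⟩
  calc (0:ENNReal) < volume (Set.Ioo ((j:ℝ)/((k:ℝ)+2)) (((j:ℝ)+1)/((k:ℝ)+2))) := by
        rw [Real.volume_Ioo]
        have h : (j:ℝ)/((k:ℝ)+2) < ((j:ℝ)+1)/((k:ℝ)+2) :=
          div_lt_div_of_pos_right (by linarith) hK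
        rw [ENNReal.ofReal_pos]
        linarith
    _ ≤ volume ((QuotientAddGroup.mk ⁻¹' (frac ⁻¹' Set.Ico ((j:ℝ)/((k:ℝ)+2)) (((j:ℝ)+1)/((k:ℝ)+2))))
          ∩ Set.Ioc 0 (0 + 1)) := measure_mono hsub
    _ = volume (frac ⁻¹' Set.Ico ((j:ℝ)/((k:ℝ)+2)) (((j:ℝ)+1)/((k:ℝ)+2))) := (key).symm

lemma hit_aux {Ω : Type*} [MeasurableSpace Ω] (P : Measure Ω) [IsProbabilityMeasure P]
    (S : ℕ → Ω → UnitAddCircle) (hmeas : ∀ i, Measurable (S i))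
    (hindep : ProbabilityTheory.iIndepFun S P)
    (hlaw : ∀ i, P.map (S i) = volume)
    {A : Set UnitAddCircle} (hA : MeasurableSet A) (hApos : 0 < volume A) :
    ∀ᵐ ω ∂P, ∃ m, S m ω ∈ A := by
  set c := volume Aᶜ with hc
  have hc1 : c < 1 := by
    rw [hc, measure_compl hA (measure_ne_top _ _)]
    rw [UnitAddCircle.measure_univ]
    exact ENNReal.sub_lt_self ENNReal.one_ne_top one_ne_zero hApos.ne'
  have hSm : ∀ m, P (S m ⁻¹' Aᶜ) = c := by
    intro m
    rw [hc, ← hlaw m, Measure.map_apply (hmeas m) hA.compl]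
  have key : ∀ n : ℕ, P (⋂ m, S m ⁻¹' Aᶜ) ≤ c ^ n := by
    intro n
    calc P (⋂ m, S m ⁻¹' Aᶜ) ≤ P (⋂ m ∈ Finset.range n, S m ⁻¹' Aᶜ) := by
          apply measure_mono
          intro x hx
          simp only [Set.mem_iInter] at hx ⊢
          exact fun i _ => hx i
      _ = ∏ m ∈ Finset.range n, P (S m ⁻¹' Aᶜ) :=
          hindep.measure_inter_preimage_eq_mul (Finset.range n) (fun i _ => hA.compl)
      _ = c ^ n := by
          simp_rw [hSm]
          simp
  have hzero : P (⋂ m, S m ⁻¹' Aᶜ) = 0 := by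
    refine le_antisymm ?_ (zero_le)
    exact ge_of_tendsto' (ENNReal.tendsto_pow_atTop_nhds_zero_of_lt_one hc1) key
  rw [ae_iff]
  convert hzero using 2
  ext ω
  simp [not_exists]

lemma gap_lt (s : ℕ → UnitAddCircle) (K : ℕ) (hK : 2 ≤ K) (M n i ι : ℕ)
    (hM : ∀ j < K, ∃ m < M, frac (s m) ∈ Set.Ico ((j:ℝ)/(K:ℝ)) (((j:ℝ)+1)/(K:ℝ)))
    (hMn : M ≤ n) (hi : i < n)
    (hmin : ∀ j < n, j ≠ i → frac (s ι - s i) ≤ frac (s j - s i)) :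
    frac (s ι - s i) < 2 / (K:ℝ) := by
  have hK0 : (0:ℝ) < (K:ℝ) := by positivity
  have hK1 : (2:ℝ) / (K:ℝ) ≤ 1 := by
    rw [div_le_one hK0]; exact_mod_cast hK
  set a := frac (s i) with ha
  obtain ⟨ha0, ha1⟩ := frac_mem (s i)
  rw [← ha] at ha0 ha1
  set j := ⌊a * K⌋₊ with hj
  have hjle : (j:ℝ)/(K:ℝ) ≤ a := by
    rw [div_le_iff₀ hK0]
    exact Nat.floor_le (by positivity)
  have hjlt : a < ((j:ℝ)+1)/(K:ℝ) := by
    rw [lt_div_iff₀ hK0]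
    have := Nat.lt_floor_add_one (a * K)
    push_cast at this ⊢
    linarith
  have hjK : j < K := by
    rw [hj]
    exact Nat.floor_lt (by positivity) |>.2 (by nlinarith)
  rcases Nat.lt_or_ge (j + 1) K with hcase | hcase
  · obtain ⟨m, hmM, hb1, hb2⟩ := hM (j+1) hcase
    set b := frac (s m) with hb
    push_cast at hb1 hb2
    have hba : a < b := lt_of_lt_of_le hjlt hb1
    have hd : b - a < 2/(K:ℝ) := by
      have h2 : ((j:ℝ)+1+1)/(K:ℝ) - (j:ℝ)/(K:ℝ) = 2/(K:ℝ) := by ring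
      linarith
    have hmne : m ≠ i := by
      intro h; rw [h, ← ha] at hb
      exact absurd hb.symm (by intro hh; rw [hh] at hba; exact lt_irrefl _ hba)
    have hfr : frac (s m - s i) = b - a := by
      rw [frac_sub, ← hb, ← ha, Int.fract_eq_self.2 ⟨by linarith, by linarith⟩]
    calc frac (s ι - s i) ≤ frac (s m - s i) := hmin m (lt_of_lt_of_le hmM hMn) hmne
      _ < 2/(K:ℝ) := by rw [hfr]; exact hd
  · have hjK' : j + 1 = K := le_antisymm (by omega) hcase
    obtain ⟨m, hmM, hb1, hb2⟩ := hM 0 (by omega)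
    set b := frac (s m) with hb
    obtain ⟨hb0, -⟩ := frac_mem (s m)
    rw [← hb] at hb0
    push_cast at hb1 hb2
    have hjr : (j:ℝ) = (K:ℝ) - 1 := by
      have : ((j:ℝ) + 1) = (K:ℝ) := by exact_mod_cast hjK'
      linarith
    have haK : ((K:ℝ)-1)/(K:ℝ) ≤ a := by rw [← hjr]; exact hjle
    have hblt : b < 1/(K:ℝ) := by simpa using hb2
    have hba : b < a := by
      apply lt_of_lt_of_le hblt
      apply le_trans _ haK
      rw [div_le_div_iff_of_pos_right hK0]
      have : (2:ℝ) ≤ (K:ℝ) := by exact_mod_cast hK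
      linarith
    have hd0 : 0 ≤ b - a + 1 := by linarith
    have hd : b - a + 1 < 2/(K:ℝ) := by
      have h2 : 1/(K:ℝ) - ((K:ℝ)-1)/(K:ℝ) + 1 = 2/(K:ℝ) := by field_simp; ring
      linarith
    have hmne : m ≠ i := by
      intro h; rw [h, ← ha] at hb; rw [hb] at hba; exact lt_irrefl _ hba
    have hfr : frac (s m - s i) = b - a + 1 := by
      rw [frac_sub, ← hb, ← ha]
      rw [← Int.fract_add_one (b - a), Int.fract_eq_self.2 ⟨hd0, by linarith⟩]
    calc frac (s ι - s i) ≤ frac (s m - s i) := hmin m (lt_of_lt_of_le hmM hMn) hmne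
      _ < 2/(K:ℝ) := by rw [hfr]; exact hd

/-- for `g : 𝕋 → ℂ` continuous and `S₁,...,Sₙ` i.i.d. uniform on the circle,
with `N(i)` the clockwise successor index of `Sᵢ` in the sample, the average
`Bₙ = (1/n) ∑ᵢ g(S_{N(i)}) conj(g(Sᵢ))` converges almost surely to `∫ |g|²`. -/
theorem stmt19 {Ω : Type*} [MeasurableSpace Ω] (P : Measure Ω) [IsProbabilityMeasure P]
    (S : ℕ → Ω → UnitAddCircle) (hmeas : ∀ i, Measurable (S i))
    (hindep : ProbabilityTheory.iIndepFun S P)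
    (hlaw : ∀ i, P.map (S i) = volume)
    (g : UnitAddCircle → ℂ) (hg : Continuous g)
    (N : ℕ → Ω → ℕ → ℕ)
    (hN : ∀ᵐ ω ∂P, ∀ n, 2 ≤ n → ∀ i < n,
      N n ω i < n ∧ N n ω i ≠ i ∧
        ∀ j < n, j ≠ i → frac (S (N n ω i) ω - S i ω) ≤ frac (S j ω - S i ω)) :
    ∀ᵐ ω ∂P, Tendsto
      (fun n : ℕ => (1 / (n : ℂ)) *
        ∑ i ∈ Finset.range n, g (S (N n ω i) ω) * (starRingEnd ℂ) (g (S i ω)))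
      atTop (nhds ((∫ s, ‖g s‖ ^ 2 : ℝ) : ℂ)) := by
  classical
  -- bound on g
  obtain ⟨C, hC⟩ : ∃ C : ℝ, ∀ x, ‖g x‖ ≤ C := by
    obtain ⟨x₀, -, hx₀⟩ := isCompact_univ.exists_isMaxOn Set.univ_nonempty hg.norm.continuousOn
    exact ⟨‖g x₀‖, fun x => hx₀ (Set.mem_univ x)⟩
  have hC0 : 0 ≤ C := le_trans (norm_nonneg _) (hC 0)
  -- strong law of large numbers for |g(S_i)|^2
  set f : UnitAddCircle → ℝ := fun s => ‖g s‖^2 with hf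
  have hfcont : Continuous f := hg.norm.pow 2
  have hfmeas : Measurable f := hfcont.measurable
  set X : ℕ → Ω → ℝ := fun i => f ∘ S i with hX
  have hintf : Integrable f volume :=
    hfcont.integrable_of_hasCompactSupport (isClosed_tsupport f).isCompact
  have hint : Integrable (X 0) P := by
    have h := hintf
    rw [← hlaw 0] at h
    exact (integrable_map_measure hfcont.aestronglyMeasurable (hmeas 0).aemeasurable).1 h
  have hpair : Pairwise (Function.onFun (ProbabilityTheory.IndepFun · · P) X) :=
    fun i j hij => (hindep.indepFun hij).comp hfmeas hfmeas
  have hident : ∀ i, ProbabilityTheory.IdentDistrib (X i) (X 0) P P := fun i =>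
    ProbabilityTheory.IdentDistrib.comp
      ⟨(hmeas i).aemeasurable, (hmeas 0).aemeasurable, by rw [hlaw i, hlaw 0]⟩ hfmeas
  have hslln := ProbabilityTheory.strong_law_ae X hint hpair hident
  have hexp : (∫ ω, X 0 ω ∂P) = ∫ s, ‖g s‖ ^ 2 := by
    conv_rhs => rw [show (fun s => ‖g s‖ ^ 2) = f from rfl, ← hlaw 0]
    rw [integral_map (hmeas 0).aemeasurable hfcont.aestronglyMeasurable]
    rfl
  -- hitting of all arcs
  have hit : ∀ᵐ ω ∂P, ∀ k j : ℕ, j < k + 2 →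
      ∃ m, frac (S m ω) ∈ Set.Ico ((j:ℝ)/((k:ℝ)+2)) (((j:ℝ)+1)/((k:ℝ)+2)) := by
    rw [ae_all_iff]; intro k
    rw [ae_all_iff]; intro j
    by_cases hj : j < k + 2
    · filter_upwards [hit_aux P S hmeas hindep hlaw (arc_meas _ _) (arc_pos k j hj)] with ω hω
      exact fun _ => hω
    · exact Filter.Eventually.of_forall fun ω h => absurd h hj
  filter_upwards [hslln, hit, hN] with ω hA hHit hNω
  rw [hexp] at hA
  set L : ℝ := ∫ s, ‖g s‖ ^ 2 with hL
  set T : ℕ → ℂ := fun n => (1/(n:ℂ)) * ∑ i ∈ Finset.range n, ((‖g (S i ω)‖^2 : ℝ) : ℂ) with hT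
  have hTt : Tendsto T atTop (nhds ((L : ℝ) : ℂ)) := by
    have h' := (Complex.continuous_ofReal.tendsto _).comp hA
    refine Tendsto.congr ?_ h'
    intro n
    show ((((n:ℝ))⁻¹ • ∑ i ∈ Finset.range n, X i ω : ℝ) : ℂ) = _
    rw [smul_eq_mul]
    push_cast
    simp only [hT, one_div]
    rfl
  have hconj : ∀ z : ℂ, ((‖z‖^2 : ℝ) : ℂ) = z * (starRingEnd ℂ) z := by
    intro z
    have h1 : ‖z‖^2 = Complex.normSq z := by rw [Complex.sq_norm]
    rw [h1, Complex.mul_conj]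
  have hdiff : Tendsto (fun n : ℕ => ((1 / (n : ℂ)) *
      ∑ i ∈ Finset.range n, g (S (N n ω i) ω) * (starRingEnd ℂ) (g (S i ω))) - T n)
      atTop (nhds 0) := by
    rw [Metric.tendsto_atTop]
    intro ε hε
    set ε' : ℝ := ε / (2*(C+1)) with hε'def
    have hε' : 0 < ε' := by positivity
    obtain ⟨δ, hδ, hgδ⟩ := Metric.uniformContinuous_iff.1
      (CompactSpace.uniformContinuous_of_continuous hg) ε' hε'
    obtain ⟨k, hk⟩ := exists_nat_gt (2/δ)
    have hKδ : 2/((k:ℝ)+2) < δ := by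
      rw [div_lt_iff₀ (by positivity)]
      rw [div_lt_iff₀ hδ] at hk
      nlinarith
    have hmc : ∀ j : ℕ, ∃ m, j < k + 2 →
        frac (S m ω) ∈ Set.Ico ((j:ℝ)/((k:ℝ)+2)) (((j:ℝ)+1)/((k:ℝ)+2)) := by
      intro j
      by_cases hj : j < k + 2
      · obtain ⟨m, hm⟩ := hHit k j hj; exact ⟨m, fun _ => hm⟩
      · exact ⟨0, fun h => absurd h hj⟩
    choose mf hmf using hmc
    set M := (Finset.range (k+2)).sup mf + 1 with hM
    refine ⟨max M 2, fun n hn => ?_⟩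
    have hn2 : 2 ≤ n := le_trans (le_max_right _ _) hn
    have hnM : M ≤ n := le_trans (le_max_left _ _) hn
    have hn0 : (0:ℝ) < n := by
      have : (2:ℝ) ≤ n := by exact_mod_cast hn2
      linarith
    have hterm : ∀ i ∈ Finset.range n,
        ‖g (S (N n ω i) ω) * (starRingEnd ℂ) (g (S i ω)) - ((‖g (S i ω)‖^2 : ℝ) : ℂ)‖
          ≤ ε' * C := by
      intro i hi
      rw [Finset.mem_range] at hi
      obtain ⟨-, -, hmin⟩ := hNω n hn2 i hi
      have hMK : ∀ j < k + 2, ∃ m < M, frac (S m ω) ∈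
          Set.Ico ((j:ℝ)/(((k+2 : ℕ)):ℝ)) (((j:ℝ)+1)/(((k+2 : ℕ)):ℝ)) := by
        intro j hj
        refine ⟨mf j, Nat.lt_succ_of_le (Finset.le_sup (Finset.mem_range.2 hj)), ?_⟩
        have := hmf j hj
        push_cast
        push_cast at this
        exact this
      have hgap : frac (S (N n ω i) ω - S i ω) < 2/((k:ℝ)+2) := by
        have h := gap_lt (fun m => S m ω) (k+2) (by omega) M n i (N n ω i) hMK hnM hi hmin
        push_cast at h
        exact h
      have hdist : dist (S (N n ω i) ω) (S i ω) < δ := by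
        rw [dist_eq_norm]
        exact lt_of_le_of_lt (norm_le_frac _) (lt_trans hgap hKδ)
      have hgg : ‖g (S (N n ω i) ω) - g (S i ω)‖ < ε' := by
        have := hgδ hdist
        rwa [dist_eq_norm] at this
      rw [hconj, ← sub_mul, norm_mul, RCLike.norm_conj]
      exact mul_le_mul hgg.le (hC _) (norm_nonneg _) hε'.le
    have hsum : ‖∑ i ∈ Finset.range n,
        (g (S (N n ω i) ω) * (starRingEnd ℂ) (g (S i ω)) - ((‖g (S i ω)‖^2 : ℝ) : ℂ))‖
          ≤ n * (ε' * C) := by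
      refine (norm_sum_le _ _).trans ?_
      refine le_trans (Finset.sum_le_sum hterm) ?_
      rw [Finset.sum_const, Finset.card_range, nsmul_eq_mul]
    rw [dist_zero_right]
    have heq : ((1 / (n : ℂ)) *
        ∑ i ∈ Finset.range n, g (S (N n ω i) ω) * (starRingEnd ℂ) (g (S i ω))) - T n
        = (1/(n:ℂ)) * ∑ i ∈ Finset.range n,
          (g (S (N n ω i) ω) * (starRingEnd ℂ) (g (S i ω)) - ((‖g (S i ω)‖^2 : ℝ) : ℂ)) := by
      rw [hT, ← mul_sub, ← Finset.sum_sub_distrib]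
    rw [heq, norm_mul]
    have hnorm1 : ‖(1:ℂ)/(n:ℂ)‖ = 1/(n:ℝ) := by
      rw [norm_div, norm_one, Complex.norm_natCast]
    rw [hnorm1]
    calc 1/(n:ℝ) * ‖∑ i ∈ Finset.range n,
          (g (S (N n ω i) ω) * (starRingEnd ℂ) (g (S i ω)) - ((‖g (S i ω)‖^2 : ℝ) : ℂ))‖
        ≤ 1/(n:ℝ) * ((n:ℝ) * (ε' * C)) := by
          apply mul_le_mul_of_nonneg_left hsum
          positivity
      _ = ε' * C := by field_simp
      _ < ε := by
          rw [hε'def, div_mul_eq_mul_div, div_lt_iff₀ (by positivity)]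
          nlinarith
  have := hdiff.add hTt
  simp only [sub_add_cancel, zero_add] at this
  exact this
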